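/- Let M be a negative definite symmetric matrix over ℚ with nonnegative off-diagonal entries, and let a be a vector such that Ma has all entries ≤ 0 (i.e., a 'nef over the base' condition). Then all entries of a are ≥ 0. -/

import Mathlib

/-- negativity lemma, linear-algebra form: Let `M` be a negative definite
symmetric rational matrix with nonnegative off-diagonal entries, and let `a` be a vector
with `(M a)_i ≤ 0` for all `i`. Then `a_i ≥ 0` for all `i`. -/
theorem negativity_lemma_matrix
    {n : ℕ} (M : Matrix (Fin n) (Fin n) ℚ)
    (hsymm : M.IsSymm)
    (hnegdef : ∀ x : Fin n → ℚ, x ≠ 0 → dotProduct x (M.mulVec x) < 0)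
    (hoff : ∀ i j : Fin n, i ≠ j → 0 ≤ M i j)
    (a : Fin n → ℚ)
    (hnef : ∀ i, M.mulVec a i ≤ 0) :
    ∀ i, 0 ≤ a i := by
  classical
  set apos : Fin n → ℚ := fun i => max (a i) 0 with hapos
  set aneg : Fin n → ℚ := fun i => max (-a i) 0 with haneg
  have hposnn : ∀ i, 0 ≤ apos i := fun i => le_max_right _ _
  have hnegnn : ∀ i, 0 ≤ aneg i := fun i => le_max_right _ _
  have hprod : ∀ i, aneg i * apos i = 0 := by
    intro i
    rcases le_total (a i) 0 with h | h
    · have : apos i = 0 := max_eq_right h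
      rw [this, mul_zero]
    · have : aneg i = 0 := max_eq_right (neg_nonpos.mpr h)
      rw [this, zero_mul]
  have hsplit : a = apos - aneg := by
    funext i
    simp only [hapos, haneg, Pi.sub_apply]
    rcases le_total (a i) 0 with h | h
    · rw [max_eq_right h, max_eq_left (neg_nonneg.mpr h)]; ring
    · rw [max_eq_left h, max_eq_right (neg_nonpos.mpr h)]; ring
  have hzero : aneg = 0 := by
    by_contra hne
    have hlt := hnegdef aneg hne
    have h1 : dotProduct aneg (M.mulVec a) ≤ 0 :=
      Finset.sum_nonpos fun i _ => mul_nonpos_of_nonneg_of_nonpos (hnegnn i) (hnef i)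
    have h3 : 0 ≤ dotProduct aneg (M.mulVec apos) := by
      have key : ∀ i j, 0 ≤ aneg i * (M i j * apos j) := by
        intro i j
        rcases eq_or_ne i j with rfl | hij
        · have : aneg i * (M i i * apos i) = M i i * (aneg i * apos i) := by ring
          rw [this, hprod i, mul_zero]
        · exact mul_nonneg (hnegnn i) (mul_nonneg (hoff i j hij) (hposnn j))
      simp only [dotProduct, Matrix.mulVec, Finset.mul_sum]
      exact Finset.sum_nonneg fun i _ => Finset.sum_nonneg fun j _ => key i j
    have h4 : dotProduct aneg (M.mulVec aneg) =
        dotProduct aneg (M.mulVec apos) - dotProduct aneg (M.mulVec a) := by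
      rw [hsplit, Matrix.mulVec_sub, dotProduct_sub]
      ring
    linarith
  intro i
  have h := congrFun hzero i
  simp only [haneg, Pi.zero_apply] at h
  have : -a i ≤ 0 := by
    by_contra hc
    push_neg at hc
    rw [max_eq_left hc.le] at h
    linarith
  linarith
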